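/- If A and B are bounded operators on a complex Hilbert space with AB = λBA (λ ∈ ℂ nonzero) and AB ≠ 0, then σ(AB) = σ(BA) = λ·σ(AB). -/

import Mathlib

open Pointwise

variable {H : Type*} [NormedAddCommGroup H] [InnerProductSpace ℂ H] [CompleteSpace H]

theorem stmt2 (A B : H →L[ℂ] H) (lam : ℂ) (hlam : lam ≠ 0)
    (h : A * B = lam • (B * A)) (hne : A * B ≠ 0) :
    spectrum ℂ (A * B) = spectrum ℂ (B * A) ∧
    spectrum ℂ (A * B) = lam • spectrum ℂ (A * B) := by
  set u : ℂˣ := Units.mk0 lam hlam with hu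
  have hspec : spectrum ℂ (A * B) = u • spectrum ℂ (B * A) := by
    rw [h]
    exact spectrum.unit_smul_eq_smul (B * A) u
  have husmul : ∀ s : Set ℂ, u • s = lam • s := by
    intro s
    ext z
    simp [Units.smul_def, hu]
  have hzero : (0 : ℂ) ∈ spectrum ℂ (A * B) ↔ (0 : ℂ) ∈ spectrum ℂ (B * A) := by
    rw [hspec]
    constructor
    · rintro ⟨x, hx, hxe⟩
      have : x = 0 := by
        simpa [Units.smul_def, hu, smul_eq_mul, mul_eq_zero, hlam] using hxe
      rwa [this] at hx
    · intro hx
      exact ⟨0, hx, by simp⟩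
  have hmain : spectrum ℂ (A * B) = spectrum ℂ (B * A) := by
    ext z
    by_cases hz : z = 0
    · subst hz; exact hzero
    · constructor
      · intro hmem
        have : z ∈ spectrum ℂ (A * B) \ {0} := ⟨hmem, hz⟩
        rw [spectrum.nonzero_mul_comm] at this
        exact this.1
      · intro hmem
        have : z ∈ spectrum ℂ (B * A) \ {0} := ⟨hmem, hz⟩
        rw [← spectrum.nonzero_mul_comm] at this
        exact this.1
  refine ⟨hmain, ?_⟩
  calc spectrum ℂ (A * B) = u • spectrum ℂ (B * A) := hspec
    _ = u • spectrum ℂ (A * B) := by rw [hmain]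
    _ = lam • spectrum ℂ (A * B) := husmul _
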